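/- Let U, U* ∈ ℝ^{d×r} both have orthonormal columns, and set H = Uᵀ U*. Then the row-wise ℓ2 sup-norm satisfies ‖U Uᵀ − U* U*ᵀ‖_{2,∞} ≤ ‖U H − U*‖_{2,∞} + ‖U‖_{2,∞} · ‖U Uᵀ − U* U*ᵀ‖_F. -/

import Mathlib

open Matrix
/-- Row-wise ℓ2 sup-norm ‖A‖_{2,∞} of a real matrix. -/
noncomputable def rowSupNorm {m n : Type*} [Fintype n] (A : Matrix m n ℝ) : ℝ :=
  ⨆ i, Real.sqrt (∑ j, (A i j) ^ 2)

/-- Frobenius norm of a real matrix. -/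
noncomputable def frobNorm {m n : Type*} [Fintype m] [Fintype n] (A : Matrix m n ℝ) : ℝ :=
  Real.sqrt (∑ i, ∑ j, (A i j) ^ 2)

/-- Triangle inequality for the Euclidean norm of finitely supported real vectors. -/
lemma sqrt_sum_sq_add_le {n : Type*} [Fintype n] (x y : n → ℝ) :
    Real.sqrt (∑ j, (x j + y j) ^ 2) ≤
      Real.sqrt (∑ j, x j ^ 2) + Real.sqrt (∑ j, y j ^ 2) := by
  have h := norm_add_le ((WithLp.equiv 2 (n → ℝ)).symm x) ((WithLp.equiv 2 (n → ℝ)).symm y)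
  simpa [EuclideanSpace.norm_eq, Real.norm_eq_abs, sq_abs, WithLp.equiv_symm_apply, PiLp.toLp_apply] using h

/-- For `V` with orthonormal columns, `‖y Vᵀ‖₂ = ‖y‖₂` (squared form). -/
lemma ortho_key {d r : ℕ} (V : Matrix (Fin d) (Fin r) ℝ) (hV : Vᵀ * V = 1)
    (y : Fin r → ℝ) :
    ∑ i, (∑ k, y k * V i k) ^ 2 = ∑ k, (y k) ^ 2 := by
  have hVe : ∀ k k', (∑ i, V i k * V i k') = if k = k' then (1:ℝ) else 0 := by
    intro k k'
    have := congrFun (congrFun hV k) k'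
    simpa [Matrix.mul_apply, Matrix.transpose_apply, Matrix.one_apply] using this
  calc ∑ i, (∑ k, y k * V i k) ^ 2
      = ∑ i, ∑ k, ∑ k', (y k * y k') * (V i k * V i k') := by
        refine Finset.sum_congr rfl fun i _ => ?_
        rw [sq, Finset.sum_mul_sum]
        refine Finset.sum_congr rfl fun k _ => Finset.sum_congr rfl fun k' _ => by ring
    _ = ∑ k, ∑ k', (y k * y k') * (∑ i, V i k * V i k') := by
        rw [Finset.sum_comm]
        refine Finset.sum_congr rfl fun k _ => ?_
        rw [Finset.sum_comm]
        refine Finset.sum_congr rfl fun k' _ => ?_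
        rw [← Finset.mul_sum]
    _ = ∑ k, (y k) ^ 2 := by
        refine Finset.sum_congr rfl fun k _ => ?_
        rw [Finset.sum_eq_single k]
        · simp [hVe k k, sq]
        · intro k' _ hk'; simp [hVe k k', (Ne.symm hk')]
        · intro h; exact absurd (Finset.mem_univ k) h

/-- Contraction: multiplying by an orthonormal-column matrix transposed contracts ℓ2 norms. -/
lemma ortho_contract {d r : ℕ} (V : Matrix (Fin d) (Fin r) ℝ) (hV : Vᵀ * V = 1)
    (x : Fin d → ℝ) :
    ∑ k, (∑ i, V i k * x i) ^ 2 ≤ ∑ i, (x i) ^ 2 := by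
  set y : Fin r → ℝ := fun k => ∑ i, V i k * x i with hy
  -- ⟨y, y⟩ = ⟨x, V y⟩
  have h1 : ∑ k, y k ^ 2 = ∑ i, x i * (∑ k, y k * V i k) := by
    calc ∑ k, y k ^ 2 = ∑ k, y k * ∑ i, V i k * x i := by
          refine Finset.sum_congr rfl fun k _ => by rw [sq, hy]
      _ = ∑ k, ∑ i, x i * (y k * V i k) := by
          refine Finset.sum_congr rfl fun k _ => ?_
          rw [Finset.mul_sum]; exact Finset.sum_congr rfl fun i _ => by ring
      _ = ∑ i, x i * (∑ k, y k * V i k) := by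
          rw [Finset.sum_comm]
          exact Finset.sum_congr rfl fun i _ => by rw [Finset.mul_sum]
  have h2 : ∑ i, (∑ k, y k * V i k) ^ 2 = ∑ k, y k ^ 2 := ortho_key V hV y
  have h3 : ∑ i, x i * (∑ k, y k * V i k) ≤
      Real.sqrt (∑ i, x i ^ 2) * Real.sqrt (∑ i, (∑ k, y k * V i k) ^ 2) :=
    Real.sum_mul_le_sqrt_mul_sqrt _ _ _
  rw [h2] at h3
  have hA : Real.sqrt (∑ k, y k ^ 2) ^ 2 = ∑ k, y k ^ 2 :=
    Real.sq_sqrt (Finset.sum_nonneg fun _ _ => sq_nonneg _)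
  have hB : Real.sqrt (∑ i, x i ^ 2) ^ 2 = ∑ i, x i ^ 2 :=
    Real.sq_sqrt (Finset.sum_nonneg fun _ _ => sq_nonneg _)
  have key : ∑ k, y k ^ 2 ≤ Real.sqrt (∑ i, x i ^ 2) * Real.sqrt (∑ k, y k ^ 2) :=
    h1 ▸ h3
  nlinarith [Real.sqrt_nonneg (∑ k, y k ^ 2), Real.sqrt_nonneg (∑ i, x i ^ 2),
    sq_nonneg (Real.sqrt (∑ k, y k ^ 2) - Real.sqrt (∑ i, x i ^ 2))]

theorem two_inf_norm_transfer {d r : ℕ} (U Ustar : Matrix (Fin d) (Fin r) ℝ)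
    (hU : Uᵀ * U = 1) (hUstar : Ustarᵀ * Ustar = 1) :
    rowSupNorm (U * Uᵀ - Ustar * Ustarᵀ) ≤
      rowSupNorm (U * (Uᵀ * Ustar) - Ustar) +
        rowSupNorm U * frobNorm (U * Uᵀ - Ustar * Ustarᵀ) := by
  set P : Matrix (Fin d) (Fin d) ℝ := U * Uᵀ - Ustar * Ustarᵀ with hP
  set B : Matrix (Fin d) (Fin r) ℝ := U * (Uᵀ * Ustar) - Ustar with hB
  -- decomposition
  have hdecomp : P = B * Ustarᵀ + U * (Uᵀ * P) := by
    have hUUU : Uᵀ * (U * Uᵀ) = Uᵀ := by rw [← Matrix.mul_assoc, hU, Matrix.one_mul]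
    rw [hP, hB]
    rw [Matrix.mul_sub Uᵀ, hUUU, Matrix.mul_sub U, Matrix.sub_mul]
    simp only [Matrix.mul_assoc]
    abel
  have hfrob_nonneg : 0 ≤ frobNorm P := Real.sqrt_nonneg _
  -- row-wise bound
  have hrow : ∀ i, Real.sqrt (∑ j, (P i j) ^ 2) ≤
      Real.sqrt (∑ j, (B i j) ^ 2) + Real.sqrt (∑ j, (U i j) ^ 2) * frobNorm P := by
    intro i
    have htri : Real.sqrt (∑ j, (P i j) ^ 2) ≤
        Real.sqrt (∑ j, ((B * Ustarᵀ) i j) ^ 2) +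
          Real.sqrt (∑ j, ((U * (Uᵀ * P)) i j) ^ 2) := by
      have := sqrt_sum_sq_add_le (fun j => (B * Ustarᵀ) i j) (fun j => (U * (Uᵀ * P)) i j)
      have hPij : ∀ j, P i j = (B * Ustarᵀ) i j + (U * (Uᵀ * P)) i j := by
        intro j
        conv_lhs => rw [hdecomp]
        rfl
      simpa [← hPij] using this
    -- first term: equals row norm of B
    have h1 : ∑ j, ((B * Ustarᵀ) i j) ^ 2 = ∑ j, (B i j) ^ 2 := by
      have := ortho_key Ustar hUstar (fun k => B i k)
      simpa [Matrix.mul_apply, Matrix.transpose_apply] using this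
    -- second term: Cauchy-Schwarz
    have h2 : Real.sqrt (∑ j, ((U * (Uᵀ * P)) i j) ^ 2) ≤
        Real.sqrt (∑ j, (U i j) ^ 2) * frobNorm P := by
      set M : Matrix (Fin r) (Fin d) ℝ := Uᵀ * P with hM
      have hcs : ∀ j, ((U * M) i j) ^ 2 ≤ (∑ k, (U i k) ^ 2) * (∑ k, (M k j) ^ 2) := by
        intro j
        have := Finset.sum_mul_sq_le_sq_mul_sq Finset.univ (fun k => U i k) (fun k => M k j)
        simpa [Matrix.mul_apply] using this
      have hsum : ∑ j, ((U * M) i j) ^ 2 ≤ (∑ k, (U i k) ^ 2) * (∑ j, ∑ k, (M k j) ^ 2) := by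
        rw [Finset.mul_sum]
        exact Finset.sum_le_sum fun j _ => hcs j
      -- ‖M‖_F ≤ ‖P‖_F columnwise
      have hMF : ∑ j, ∑ k, (M k j) ^ 2 ≤ ∑ i', ∑ j, (P i' j) ^ 2 := by
        calc ∑ j, ∑ k, (M k j) ^ 2 ≤ ∑ j, ∑ i', (P i' j) ^ 2 := by
              refine Finset.sum_le_sum fun j _ => ?_
              have := ortho_contract U hU (fun i' => P i' j)
              simpa [hM, Matrix.mul_apply, Matrix.transpose_apply] using this
          _ = ∑ i', ∑ j, (P i' j) ^ 2 := Finset.sum_comm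
      have hfinal : ∑ j, ((U * M) i j) ^ 2 ≤ (∑ k, (U i k) ^ 2) * (∑ i', ∑ j, (P i' j) ^ 2) := by
        refine hsum.trans ?_
        exact mul_le_mul_of_nonneg_left hMF (Finset.sum_nonneg fun _ _ => sq_nonneg _)
      calc Real.sqrt (∑ j, ((U * M) i j) ^ 2)
          ≤ Real.sqrt ((∑ k, (U i k) ^ 2) * (∑ i', ∑ j, (P i' j) ^ 2)) :=
            Real.sqrt_le_sqrt hfinal
        _ = Real.sqrt (∑ k, (U i k) ^ 2) * frobNorm P := by
            rw [Real.sqrt_mul (Finset.sum_nonneg fun _ _ => sq_nonneg _)]; rfl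
    calc Real.sqrt (∑ j, (P i j) ^ 2)
        ≤ Real.sqrt (∑ j, ((B * Ustarᵀ) i j) ^ 2) +
            Real.sqrt (∑ j, ((U * (Uᵀ * P)) i j) ^ 2) := htri
      _ ≤ Real.sqrt (∑ j, (B i j) ^ 2) + Real.sqrt (∑ j, (U i j) ^ 2) * frobNorm P := by
          rw [h1]; exact add_le_add_right h2 _
  -- assemble via sup
  rcases isEmpty_or_nonempty (Fin d) with hd | hd
  · simp [rowSupNorm, Real.iSup_of_isEmpty, hfrob_nonneg]
  · have hbddB : BddAbove (Set.range fun i => Real.sqrt (∑ j, (B i j) ^ 2)) :=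
      (Set.finite_range _).bddAbove
    have hbddU : BddAbove (Set.range fun i => Real.sqrt (∑ j, (U i j) ^ 2)) :=
      (Set.finite_range _).bddAbove
    refine ciSup_le fun i => ?_
    refine (hrow i).trans ?_
    have hle1 : Real.sqrt (∑ j, (B i j) ^ 2) ≤ rowSupNorm B := le_ciSup hbddB i
    have hle2 : Real.sqrt (∑ j, (U i j) ^ 2) ≤ rowSupNorm U := le_ciSup hbddU i
    exact add_le_add hle1 (mul_le_mul_of_nonneg_right hle2 hfrob_nonneg)
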